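/- Let V be a Q-vector space and m, r positive integers. For v_1,...,v_m, w_1,...,w_m in V, if Σ_{i=1}^m v_i^{⊗k} = Σ_{i=1}^m w_i^{⊗k} in V^{⊗k} for all 1 ≤ k ≤ min(m,r), then Σ_{i=1}^m v_i^{⊗k} = Σ_{i=1}^m w_i^{⊗k} for all 1 ≤ k ≤ r. -/

import Mathlib

open Finset MvPolynomial in
lemma esymm_gt_card {m k : ℕ} (h : m < k) : MvPolynomial.esymm (Fin m) ℚ k = 0 := by
  rw [MvPolynomial.esymm]
  rw [Finset.powersetCard_eq_empty.mpr (by simpa using h)]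
  simp

open Finset MvPolynomial in
lemma psum_all {m : ℕ} (x y : Fin m → ℚ)
    (h : ∀ j : ℕ, 1 ≤ j → j ≤ m → ∑ i, x i ^ j = ∑ i, y i ^ j) :
    ∀ k : ℕ, ∑ i, x i ^ k = ∑ i, y i ^ k := by
  have heval : ∀ (z : Fin m → ℚ) (k : ℕ), eval z (psum (Fin m) ℚ k) = ∑ i, z i ^ k := by
    intro z k; simp [psum]
  have hE : ∀ j : ℕ, eval x (esymm (Fin m) ℚ j) = eval y (esymm (Fin m) ℚ j) := by
    intro j
    induction j using Nat.strong_induction_on with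
    | _ j ih =>
      rcases Nat.eq_zero_or_pos j with hj | hj
      · subst hj; simp
      rcases le_or_gt j m with hjm | hjm
      · -- use Newton recurrence
        have hN := mul_esymm_eq_sum (Fin m) ℚ j
        have hx := congrArg (eval x) hN
        have hy := congrArg (eval y) hN
        simp only [map_mul, map_sum, map_pow, map_natCast, map_neg, map_one] at hx hy
        have hsum : ∀ a ∈ {a ∈ antidiagonal j | a.1 < j},
            (-1:ℚ) ^ a.1 * eval x (esymm (Fin m) ℚ a.1) * eval x (psum (Fin m) ℚ a.2)
            = (-1:ℚ) ^ a.1 * eval y (esymm (Fin m) ℚ a.1) * eval y (psum (Fin m) ℚ a.2) := by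
          intro a ha
          simp only [mem_filter, Finset.HasAntidiagonal.mem_antidiagonal] at ha
          rw [ih a.1 ha.2, heval, heval, h a.2 (by omega) (by omega)]
        have : eval x ((j:MvPolynomial (Fin m) ℚ) * esymm (Fin m) ℚ j)
            = eval y ((j:MvPolynomial (Fin m) ℚ) * esymm (Fin m) ℚ j) := by
          rw [hN]
          simp only [map_mul, map_sum, map_pow, map_neg, map_one]
          exact congrArg _ (Finset.sum_congr rfl hsum)
        simp only [map_mul, map_natCast] at this
        have hj0 : (j:ℚ) ≠ 0 := Nat.cast_ne_zero.mpr (by omega)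
        exact mul_left_cancel₀ hj0 this
      · rw [esymm_gt_card hjm]; simp
  intro k
  rw [← heval x k, ← heval y k]
  induction k using Nat.strong_induction_on with
  | _ k ih =>
    rcases Nat.eq_zero_or_pos k with hk | hk
    · subst hk; simp
    have hN := psum_eq_mul_esymm_sub_sum (Fin m) ℚ k hk
    have hx := congrArg (eval x) hN
    have hy := congrArg (eval y) hN
    rw [hx, hy]
    simp only [map_sub, map_mul, map_sum, map_pow, map_neg, map_one, map_natCast]
    rw [hE k]
    congr 1
    refine Finset.sum_congr rfl fun a ha => ?_
    simp only [mem_filter, Finset.HasAntidiagonal.mem_antidiagonal, Set.mem_Ioo] at ha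
    rw [hE a.1, ih a.2 (by omega)]

open Finset in
lemma prod_comp_eq_pow {n k : ℕ} (f : Fin n → ℚ) (p : Fin k → Fin n) :
    ∏ j, f (p j) = ∏ l, f l ^ (((∑ j, Finsupp.single (p j) 1) : Fin n →₀ ℕ) l) := by
  have hcount : ∀ l : Fin n, ((∑ j, Finsupp.single (p j) 1) : Fin n →₀ ℕ) l
      = (univ.filter fun j => p j = l).card := by
    intro l
    rw [Finsupp.finset_sum_apply, Finset.card_filter]
    refine Finset.sum_congr rfl fun j _ => ?_
    rw [Finsupp.single_apply]
  rw [← Finset.prod_fiberwise_of_maps_to (t := univ) (g := p) (fun i _ => mem_univ _)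
      (fun j => f (p j))]
  refine Finset.prod_congr rfl fun l _ => ?_
  rw [hcount,
    Finset.prod_congr rfl (fun j hj => by rw [(Finset.mem_filter.mp hj).2] :
      ∀ j ∈ univ.filter fun j => p j = l, f (p j) = f l),
    Finset.prod_const]

open Finset MvPolynomial in
lemma multi_power_sums {m n : ℕ} (a b : Fin m → Fin n → ℚ)
    (h : ∀ k : ℕ, 1 ≤ k → k ≤ m → ∀ c : Fin k → Fin n,
      ∑ i, ∏ j, a i (c j) = ∑ i, ∏ j, b i (c j))
    (hpsum : ∀ (x y : Fin m → ℚ),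
      (∀ j : ℕ, 1 ≤ j → j ≤ m → ∑ i, x i ^ j = ∑ i, y i ^ j) →
      ∀ k : ℕ, ∑ i, x i ^ k = ∑ i, y i ^ k) :
    ∀ (k : ℕ) (c : Fin k → Fin n),
      ∑ i, ∏ j, a i (c j) = ∑ i, ∏ j, b i (c j) := by
  -- Step 1: for every t, power sums of ⟨t, a i⟩ and ⟨t, b i⟩ agree in all degrees
  have expand : ∀ (z : Fin m → Fin n → ℚ) (t : Fin n → ℚ) (k : ℕ),
      ∑ i, (∑ l, t l * z i l) ^ k
        = ∑ p : Fin k → Fin n, (∏ j, t (p j)) * ∑ i, ∏ j, z i (p j) := by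
    intro z t k
    have : ∀ i, (∑ l, t l * z i l) ^ k
        = ∑ p ∈ Fintype.piFinset (fun _ : Fin k => (univ : Finset (Fin n))),
            ∏ j, (t (p j) * z i (p j)) := fun i => Finset.sum_pow' _ _ _
    simp only [this, Fintype.piFinset_univ]
    rw [Finset.sum_comm]
    refine Finset.sum_congr rfl fun p _ => ?_
    rw [Finset.mul_sum]
    refine Finset.sum_congr rfl fun i _ => ?_
    rw [← Finset.prod_mul_distrib]
  have step1 : ∀ (t : Fin n → ℚ) (k : ℕ),
      ∑ i, (∑ l, t l * a i l) ^ k = ∑ i, (∑ l, t l * b i l) ^ k := by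
    intro t
    refine hpsum _ _ (fun j hj1 hjm => ?_)
    rw [expand, expand]
    refine Finset.sum_congr rfl fun p _ => ?_
    rw [h j hj1 hjm p]
  -- Step 2: polynomial identity
  intro k c
  set P : MvPolynomial (Fin n) ℚ := ∑ i, (∑ l, C (a i l) * X l) ^ k with hP
  set Q : MvPolynomial (Fin n) ℚ := ∑ i, (∑ l, C (b i l) * X l) ^ k with hQ
  have hPQ : P = Q := by
    apply MvPolynomial.funext
    intro t
    simp only [hP, hQ, map_sum, map_pow, map_mul, eval_C, eval_X]
    have := step1 t k
    simpa [mul_comm] using this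
  -- Step 3: extract coefficient at α
  set α : Fin n →₀ ℕ := ∑ j, Finsupp.single (c j) 1 with hα
  have hexp : ∀ z : Fin m → Fin n → ℚ,
      MvPolynomial.coeff α (∑ i, (∑ l, C (z i l) * X l) ^ k : MvPolynomial (Fin n) ℚ)
        = ((univ.filter fun p : Fin k → Fin n =>
            (∑ j, Finsupp.single (p j) 1 : Fin n →₀ ℕ) = α).card : ℚ) * ∑ i, ∏ j, z i (c j) := by
    intro z
    have hterm : ∀ i, ((∑ l, C (z i l) * X l) ^ k : MvPolynomial (Fin n) ℚ)
        = ∑ p : Fin k → Fin n, monomial (∑ j, Finsupp.single (p j) 1) (∏ j, z i (p j)) := by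
      intro i
      rw [Finset.sum_pow' univ (fun l => (C (z i l) * X l : MvPolynomial (Fin n) ℚ)) k]
      rw [Fintype.piFinset_univ]
      refine Finset.sum_congr rfl fun p _ => ?_
      rw [monomial_sum_index]
      rw [Finset.prod_mul_distrib]
      congr 1
      rw [← map_prod]
    simp only [hterm]
    have hinner : ∀ i, MvPolynomial.coeff α
        (∑ p : Fin k → Fin n, (monomial (∑ j, Finsupp.single (p j) 1) (∏ j, z i (p j))
          : MvPolynomial (Fin n) ℚ))
        = ((univ.filter fun p : Fin k → Fin n =>
            (∑ j, Finsupp.single (p j) 1 : Fin n →₀ ℕ) = α).card : ℚ) * ∏ j, z i (c j) := by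
      intro i
      rw [MvPolynomial.coeff_sum]
      simp only [MvPolynomial.coeff_monomial]
      rw [Finset.sum_ite, Finset.sum_const_zero, add_zero]
      have : ∀ p ∈ univ.filter fun p : Fin k → Fin n =>
          (∑ j, Finsupp.single (p j) 1 : Fin n →₀ ℕ) = α,
          (∏ j, z i (p j)) = ∏ j, z i (c j) := by
        intro p hp
        have hpα := (Finset.mem_filter.mp hp).2
        rw [prod_comp_eq_pow (fun l => z i l) p, prod_comp_eq_pow (fun l => z i l) c, hpα, ← hα]
      rw [Finset.sum_congr rfl this, Finset.sum_const, nsmul_eq_mul]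
    rw [MvPolynomial.coeff_sum]
    simp only [hinner]
    rw [← Finset.mul_sum]
  have hkey := congrArg (MvPolynomial.coeff α) hPQ
  rw [hexp a, hexp b] at hkey
  have hcmem : c ∈ univ.filter fun p : Fin k → Fin n =>
      (∑ j, Finsupp.single (p j) 1 : Fin n →₀ ℕ) = α := by
    simp only [Finset.mem_filter, Finset.mem_univ, true_and, hα]
  have hN : ((univ.filter fun p : Fin k → Fin n =>
      (∑ j, Finsupp.single (p j) 1 : Fin n →₀ ℕ) = α).card : ℚ) ≠ 0 := by
    have : 0 < (univ.filter fun p : Fin k → Fin n =>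
        (∑ j, Finsupp.single (p j) 1 : Fin n →₀ ℕ) = α).card :=
      Finset.card_pos.mpr ⟨c, hcmem⟩
    exact_mod_cast Nat.pos_iff_ne_zero.mp this
  exact mul_left_cancel₀ hN hkey

theorem stmt_5 (V : Type*) [AddCommGroup V] [Module ℚ V] (m r : ℕ) (hm : 0 < m) (hr : 0 < r)
    (v w : Fin m → V)
    (h : ∀ k : ℕ, 1 ≤ k → k ≤ min m r →
      ∑ i, PiTensorProduct.tprod ℚ (fun _ : Fin k => v i) =
        ∑ i, PiTensorProduct.tprod ℚ (fun _ : Fin k => w i)) :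
    ∀ k : ℕ, 1 ≤ k → k ≤ r →
      ∑ i, PiTensorProduct.tprod ℚ (fun _ : Fin k => v i) =
        ∑ i, PiTensorProduct.tprod ℚ (fun _ : Fin k => w i) := by
  intro k hk1 hkr
  rcases le_or_gt r m with hrm | hmr
  · exact h k hk1 (by omega)
  classical
  set W := Submodule.span ℚ (Set.range v ∪ Set.range w) with hW
  have hfin : FiniteDimensional ℚ W :=
    FiniteDimensional.span_of_finite ℚ ((Set.finite_range v).union (Set.finite_range w))
  set n := Module.finrank ℚ W with hn
  let bW : Module.Basis (Fin n) ℚ W := Module.finBasis ℚ W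
  obtain ⟨π, hπ⟩ := LinearMap.exists_leftInverse_of_injective W.subtype W.ker_subtype
  have hvW : ∀ i, v i ∈ W := fun i => Submodule.subset_span (Or.inl ⟨i, rfl⟩)
  have hwW : ∀ i, w i ∈ W := fun i => Submodule.subset_span (Or.inr ⟨i, rfl⟩)
  have hπv : ∀ i, π (v i) = ⟨v i, hvW i⟩ := fun i => by
    have := LinearMap.congr_fun hπ ⟨v i, hvW i⟩
    simpa using this
  have hπw : ∀ i, π (w i) = ⟨w i, hwW i⟩ := fun i => by
    have := LinearMap.congr_fun hπ ⟨w i, hwW i⟩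
    simpa using this
  set a : Fin m → Fin n → ℚ := fun i l => bW.repr (π (v i)) l with ha
  set b : Fin m → Fin n → ℚ := fun i l => bW.repr (π (w i)) l with hb
  -- transfer the hypothesis to scalars
  have hscal : ∀ k' : ℕ, 1 ≤ k' → k' ≤ m → ∀ c : Fin k' → Fin n,
      ∑ i, ∏ j, a i (c j) = ∑ i, ∏ j, b i (c j) := by
    intro k' h1 h2 c
    have hk' := h k' h1 (by omega)
    set F : MultilinearMap ℚ (fun _ : Fin k' => V) ℚ :=
      (MultilinearMap.mkPiAlgebra ℚ (Fin k') ℚ).compLinearMap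
        (fun j => (bW.coord (c j)).comp π) with hF
    have := congrArg (PiTensorProduct.lift F) hk'
    simp only [map_sum, PiTensorProduct.lift.tprod] at this
    simpa [hF, MultilinearMap.compLinearMap_apply, MultilinearMap.mkPiAlgebra_apply,
      Module.Basis.coord_apply, ha, hb] using this
  have hall := multi_power_sums a b hscal (fun x y hxy => psum_all x y hxy)
  -- conclusion via dual separation
  rw [← sub_eq_zero]
  rw [← Module.forall_dual_apply_eq_zero_iff ℚ]
  intro g
  set F := PiTensorProduct.lift.symm g with hFdef
  have hg : g = PiTensorProduct.lift F := (LinearEquiv.apply_symm_apply _ _).symm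
  rw [hg, map_sub, map_sum, map_sum]
  simp only [PiTensorProduct.lift.tprod]
  have key : ∀ (u : Fin m → V) (z : Fin m → Fin n → ℚ),
      (∀ i, u i = ∑ l, z i l • (bW l : V)) →
      ∑ i, F (fun _ => u i)
        = ∑ p : Fin k → Fin n, (∑ i, ∏ j, z i (p j)) • F (fun j => (bW (p j) : V)) := by
    intro u z hu
    have hFi : ∀ i, F (fun _ => u i)
        = ∑ p : Fin k → Fin n, (∏ j, z i (p j)) • F (fun j => (bW (p j) : V)) := by
      intro i
      rw [show (fun _ : Fin k => u i) = fun _ : Fin k => ∑ l, z i l • (bW l : V) from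
        funext fun _ => hu i]
      rw [F.map_sum (fun (_ : Fin k) (l : Fin n) => z i l • (bW l : V))]
      refine Finset.sum_congr rfl fun p _ => ?_
      exact F.map_smul_univ (fun j => z i (p j)) (fun j => (bW (p j) : V))
    simp only [hFi]
    rw [Finset.sum_comm]
    refine Finset.sum_congr rfl fun p _ => ?_
    rw [← Finset.sum_smul]
  have hv' : ∀ i : Fin m, v i = ∑ l, a i l • (bW l : V) := by
    intro i
    have h1 : (∑ l, a i l • bW l : W) = π (v i) := bW.sum_repr (π (v i))
    have h2 : ((π (v i) : W) : V) = v i := by rw [hπv i]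
    rw [← h2, ← h1]
    push_cast [Submodule.coe_sum]
    rfl
  have hw' : ∀ i : Fin m, w i = ∑ l, b i l • (bW l : V) := by
    intro i
    have h1 : (∑ l, b i l • bW l : W) = π (w i) := bW.sum_repr (π (w i))
    have h2 : ((π (w i) : W) : V) = w i := by rw [hπw i]
    rw [← h2, ← h1]
    push_cast [Submodule.coe_sum]
    rfl
  rw [key v a hv', key w b hw', sub_eq_zero]
  refine Finset.sum_congr rfl fun p _ => ?_
  rw [hall k p]
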